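/- Let G₁ = ⟨A, M, S, Σ⟩ and G₂ = ⟨Q, S, E, T, Σ⟩ as subgroups of Sym(Ω). Then G₁ ∩ G₂ = ⟨Q, S, T, Σ⟩, and this group equals the normalizer of A in G₂. -/

import Mathlib

open Equiv

/-! Context: `q = 3^r`, `K = F_q` a finite field with `3^r` elements, `Ω = K × K × K`,
`ε = 3^(r-1)` (so `q = 3ε`).  Permutations of `Ω` are composed left to right in the paper;
in Lean, `(g * h) x = g (h x)`, so the paper's product `g·h` corresponds to `h * g` here,
and the paper's conjugate `g⁻¹ x g` corresponds to `g * x * g⁻¹`. -/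

/-- The permutation `α_{(u,v,w)} : (a,b,c) ↦ (a+u, b+v, c+w)` of `Ω = K × K × K`. -/
def alphaPerm {K : Type*} [Field K] (u v w : K) : Equiv.Perm (K × K × K) where
  toFun x := (x.1 + u, x.2.1 + v, x.2.2 + w)
  invFun x := (x.1 - u, x.2.1 - v, x.2.2 - w)
  left_inv x := by simp
  right_inv x := by simp

/-- The permutation `β_{λ,μ} : (a,b,c) ↦ (λa, μb, (λμ)^{2ε} c)` of `Ω = K × K × K`. -/
def betaPerm {K : Type*} [Field K] (ε : ℕ) (l m : Kˣ) : Equiv.Perm (K × K × K) where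
  toFun x := ((l : K) * x.1, (m : K) * x.2.1, (((l * m) ^ (2 * ε) : Kˣ) : K) * x.2.2)
  invFun x := ((l⁻¹ : Kˣ) * x.1, (m⁻¹ : Kˣ) * x.2.1, ((((l * m) ^ (2 * ε))⁻¹ : Kˣ) : K) * x.2.2)
  left_inv x := by simp
  right_inv x := by simp

/-- The permutation `γ_e : (a,b,c) ↦ (a+eb, b, c)` of `Ω = K × K × K`. -/
def gammaPerm {K : Type*} [Field K] (e : K) : Equiv.Perm (K × K × K) where
  toFun x := (x.1 + e * x.2.1, x.2.1, x.2.2)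
  invFun x := (x.1 - e * x.2.1, x.2.1, x.2.2)
  left_inv x := by simp
  right_inv x := by simp

/-- The permutation `δ : (a,b,c) ↦ (b, -a, c)` of `Ω = K × K × K`. -/
def deltaPerm (K : Type*) [Field K] : Equiv.Perm (K × K × K) where
  toFun x := (x.2.1, -x.1, x.2.2)
  invFun x := (-x.2.1, x.1, x.2.2)
  left_inv x := by simp
  right_inv x := by simp

/-- The permutation `τ_d : (a,b,c) ↦ (a + d·b² + d^ε·c, b, c)` of `Ω = K × K × K`. -/
def tauPerm {K : Type*} [Field K] (ε : ℕ) (d : K) : Equiv.Perm (K × K × K) where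
  toFun x := (x.1 + d * x.2.1 ^ 2 + d ^ ε * x.2.2, x.2.1, x.2.2)
  invFun x := (x.1 - d * x.2.1 ^ 2 - d ^ ε * x.2.2, x.2.1, x.2.2)
  left_inv x := by obtain ⟨a, b, c⟩ := x; simp; ring
  right_inv x := by obtain ⟨a, b, c⟩ := x; simp; ring

/-- The cube map `x ↦ x³` as a permutation of a finite field of characteristic 3. -/
noncomputable def frobPerm (K : Type*) [Field K] [Fintype K] [CharP K 3] : Equiv.Perm K :=
  Equiv.ofBijective (fun x => x ^ 3)
    (Finite.injective_iff_bijective.mp (by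
      intro x y h
      exact frobenius_inj K 3 (by simpa [frobenius_def] using h)))

/-- The permutation `σ : (a,b,c) ↦ (a³, b³, c³)` of `Ω = K × K × K`. -/
noncomputable def sigmaPerm (K : Type*) [Field K] [Fintype K] [CharP K 3] :
    Equiv.Perm (K × K × K) :=
  (frobPerm K).prodCongr ((frobPerm K).prodCongr (frobPerm K))

variable (K : Type*) [Field K]

/-- `A = ⟨α_{(u,v,w)} : u,v,w ∈ F_q⟩`. -/
def Agrp : Subgroup (Equiv.Perm (K × K × K)) :=
  Subgroup.closure {g | ∃ u v w : K, g = alphaPerm u v w}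

/-- `V = ⟨α_{(u,v,0)} : u,v ∈ F_q⟩`. -/
def Vgrp : Subgroup (Equiv.Perm (K × K × K)) :=
  Subgroup.closure {g | ∃ u v : K, g = alphaPerm u v 0}

/-- `F = ⟨α_{(0,0,w)} : w ∈ F_q⟩`. -/
def Fgrp : Subgroup (Equiv.Perm (K × K × K)) :=
  Subgroup.closure {g | ∃ w : K, g = alphaPerm 0 0 w}

/-- `Z₀ = ⟨α_{(u,0,w)} : u,w ∈ F_q⟩`. -/
def Z0grp : Subgroup (Equiv.Perm (K × K × K)) :=
  Subgroup.closure {g | ∃ u w : K, g = alphaPerm u 0 w}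

/-- `Z = ⟨α_{(u,0,0)} : u ∈ F_q⟩`. -/
def Zgrp : Subgroup (Equiv.Perm (K × K × K)) :=
  Subgroup.closure {g | ∃ u : K, g = alphaPerm u 0 0}

/-- `C = ⟨γ_e : e ∈ F_q⟩`. -/
def Cgrp : Subgroup (Equiv.Perm (K × K × K)) :=
  Subgroup.closure {g | ∃ e : K, g = gammaPerm e}

/-- `R = ⟨β_{μ,μ} : μ ∈ F_q^×⟩`. -/
def Rgrp (ε : ℕ) : Subgroup (Equiv.Perm (K × K × K)) :=
  Subgroup.closure {g | ∃ μ : Kˣ, g = betaPerm ε μ μ}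

/-- `S = ⟨β_{μ²,μ} : μ ∈ F_q^×⟩`. -/
def Sgrp (ε : ℕ) : Subgroup (Equiv.Perm (K × K × K)) :=
  Subgroup.closure {g | ∃ μ : Kˣ, g = betaPerm ε (μ ^ 2) μ}

/-- `T = ⟨β_{μ,μ⁻¹} : μ ∈ F_q^×⟩`. -/
def Tgrp (ε : ℕ) : Subgroup (Equiv.Perm (K × K × K)) :=
  Subgroup.closure {g | ∃ μ : Kˣ, g = betaPerm ε μ μ⁻¹}

/-- `D = ⟨δ⟩`. -/
def Dgrp : Subgroup (Equiv.Perm (K × K × K)) :=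
  Subgroup.closure {deltaPerm K}

/-- `E = ⟨τ_d : d ∈ F_q⟩`. -/
def Egrp (ε : ℕ) : Subgroup (Equiv.Perm (K × K × K)) :=
  Subgroup.closure {g | ∃ d : K, g = tauPerm ε d}

/-- `M = ⟨C, D, T⟩`. -/
def Mgrp (ε : ℕ) : Subgroup (Equiv.Perm (K × K × K)) :=
  Cgrp K ⊔ Dgrp K ⊔ Tgrp K ε

/-- `Q = ⟨A, C⟩`. -/
def QgrpBig : Subgroup (Equiv.Perm (K × K × K)) :=
  Agrp K ⊔ Cgrp K

/-- `P = ⟨Q, E⟩`. -/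
def Pgrp (ε : ℕ) : Subgroup (Equiv.Perm (K × K × K)) :=
  QgrpBig K ⊔ Egrp K ε

/-- `Σ = ⟨σ⟩`. -/
noncomputable def Siggrp (K : Type*) [Field K] [Fintype K] [CharP K 3] :
    Subgroup (Equiv.Perm (K × K × K)) :=
  Subgroup.closure {sigmaPerm K}

/-- `G₁ = ⟨A, M, S, Σ⟩`. -/
noncomputable def G1grp (K : Type*) [Field K] [Fintype K] [CharP K 3] (ε : ℕ) :
    Subgroup (Equiv.Perm (K × K × K)) :=
  Agrp K ⊔ Mgrp K ε ⊔ Sgrp K ε ⊔ Siggrp K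

/-- `G₂ = ⟨Q, S, E, T, Σ⟩`. -/
noncomputable def G2grp (K : Type*) [Field K] [Fintype K] [CharP K 3] (ε : ℕ) :
    Subgroup (Equiv.Perm (K × K × K)) :=
  QgrpBig K ⊔ Sgrp K ε ⊔ Egrp K ε ⊔ Tgrp K ε ⊔ Siggrp K

/-- `G₁₂ = ⟨Q, S, T, Σ⟩`. -/
noncomputable def G12grp (K : Type*) [Field K] [Fintype K] [CharP K 3] (ε : ℕ) :
    Subgroup (Equiv.Perm (K × K × K)) :=
  QgrpBig K ⊔ Sgrp K ε ⊔ Tgrp K ε ⊔ Siggrp K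


/-! ### Auxiliary lemmas -/

section Aux

variable {K : Type*} [Field K]

@[simp] lemma alphaPerm_apply (u v w : K) (x : K × K × K) :
    alphaPerm u v w x = (x.1 + u, x.2.1 + v, x.2.2 + w) := rfl

@[simp] lemma gammaPerm_apply (e : K) (x : K × K × K) :
    gammaPerm e x = (x.1 + e * x.2.1, x.2.1, x.2.2) := rfl

@[simp] lemma deltaPerm_apply (x : K × K × K) :
    deltaPerm K x = (x.2.1, -x.1, x.2.2) := rfl

@[simp] lemma tauPerm_apply (ε : ℕ) (d : K) (x : K × K × K) :
    tauPerm ε d x = (x.1 + d * x.2.1 ^ 2 + d ^ ε * x.2.2, x.2.1, x.2.2) := rfl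

@[simp] lemma betaPerm_apply (ε : ℕ) (l m : Kˣ) (x : K × K × K) :
    betaPerm ε l m x = ((l : K) * x.1, (m : K) * x.2.1,
      ((l : K) * (m : K)) ^ (2 * ε) * x.2.2) := by
  show (_, _, (((l * m) ^ (2 * ε) : Kˣ) : K) * x.2.2) = _
  push_cast
  rfl

@[simp] lemma sigmaPerm_apply [Fintype K] [CharP K 3] (x : K × K × K) :
    sigmaPerm K x = (x.1 ^ 3, x.2.1 ^ 3, x.2.2 ^ 3) := rfl

@[simp] lemma betaPerm_inv_apply (ε : ℕ) (l m : Kˣ) (x : K × K × K) :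
    (betaPerm ε l m)⁻¹ x = ((l : K)⁻¹ * x.1, (m : K)⁻¹ * x.2.1,
      (((l : K) * (m : K)) ^ (2 * ε))⁻¹ * x.2.2) := by
  rw [Equiv.Perm.inv_def]
  show (((l⁻¹ : Kˣ) : K) * x.1, ((m⁻¹ : Kˣ) : K) * x.2.1,
    ((((l * m) ^ (2 * ε))⁻¹ : Kˣ) : K) * x.2.2) = _
  push_cast
  rfl

/-- The subgroup of all `alphaPerm`s, described as a set. -/
def AgrpAux (K : Type*) [Field K] : Subgroup (Equiv.Perm (K × K × K)) where
  carrier := {g | ∃ u v w : K, g = alphaPerm u v w}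
  one_mem' := ⟨0, 0, 0, by ext x <;> simp⟩
  mul_mem' := by
    rintro _ _ ⟨u, v, w, rfl⟩ ⟨u', v', w', rfl⟩
    exact ⟨u' + u, v' + v, w' + w, by ext x <;> simp [mul_assoc] <;> ring⟩
  inv_mem' := by
    rintro _ ⟨u, v, w, rfl⟩
    refine ⟨-u, -v, -w, ?_⟩
    rw [eq_comm, eq_inv_iff_mul_eq_one]
    ext x <;> simp

lemma Agrp_eq : Agrp K = AgrpAux K := Subgroup.closure_eq (AgrpAux K)

lemma mem_Agrp_iff {g : Equiv.Perm (K × K × K)} :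
    g ∈ Agrp K ↔ ∃ u v w : K, g = alphaPerm u v w := by
  rw [Agrp_eq]; rfl

lemma alpha_mem_Agrp (u v w : K) : alphaPerm u v w ∈ Agrp K :=
  mem_Agrp_iff.mpr ⟨u, v, w, rfl⟩

/-- If `g * α = α' * g` with `α' ∈ A`, then `g` conjugates `α` into `A`. -/
lemma conj_mem_of_swap {g x y : Equiv.Perm (K × K × K)}
    (h : g * x = y * g) (hy : y ∈ Agrp K) : g * x * g⁻¹ ∈ Agrp K := by
  have : g * x * g⁻¹ = y := by rw [h, mul_assoc, mul_inv_cancel, mul_one]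
  rwa [this]

lemma gamma_conj_alpha (e u v w : K) :
    gammaPerm e * alphaPerm u v w = alphaPerm (u + e * v) v w * gammaPerm e := by
  ext x <;> simp <;> ring

lemma delta_conj_alpha (u v w : K) :
    deltaPerm K * alphaPerm u v w = alphaPerm v (-u) w * deltaPerm K := by
  ext x <;> simp <;> ring

lemma beta_conj_alpha (ε : ℕ) (l m : Kˣ) (u v w : K) :
    betaPerm ε l m * alphaPerm u v w
      = alphaPerm ((l : K) * u) ((m : K) * v) (((l : K) * (m : K)) ^ (2 * ε) * w)
        * betaPerm ε l m := by
  ext x <;> simp <;> ring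

lemma sigma_conj_alpha [Fintype K] [CharP K 3] (u v w : K) :
    sigmaPerm K * alphaPerm u v w = alphaPerm (u ^ 3) (v ^ 3) (w ^ 3) * sigmaPerm K := by
  have : Fact (Nat.Prime 3) := ⟨by norm_num⟩
  have h3 : ∀ a b : K, (a + b) ^ 3 = a ^ 3 + b ^ 3 := fun a b => add_pow_char a b 3
  ext x <;> simp [h3]

lemma mem_normalizer_of_conj {G : Type*} [Group G] [Finite G] {H : Subgroup G} {g : G}
    (h : ∀ x ∈ H, g * x * g⁻¹ ∈ H) : g ∈ Subgroup.normalizer (H : Set G) :=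
  Subgroup.mem_normalizer_fintype h

lemma mem_normalizer_A [Fintype K] {g : Equiv.Perm (K × K × K)}
    (h : ∀ u v w : K, ∃ u' v' w' : K,
      g * alphaPerm u v w = alphaPerm u' v' w' * g) :
    g ∈ Subgroup.normalizer (Agrp K : Set (Equiv.Perm (K × K × K))) := by
  refine mem_normalizer_of_conj ?_
  intro x hx
  obtain ⟨u, v, w, rfl⟩ := mem_Agrp_iff.mp hx
  obtain ⟨u', v', w', hs⟩ := h u v w
  exact conj_mem_of_swap hs (alpha_mem_Agrp u' v' w')

lemma gamma_mem_normalizer [Fintype K] (e : K) : gammaPerm e ∈ Subgroup.normalizer (Agrp K : Set (Equiv.Perm (K × K × K))) :=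
  mem_normalizer_A fun u v w => ⟨u + e * v, v, w, gamma_conj_alpha e u v w⟩

lemma delta_mem_normalizer [Fintype K] : deltaPerm K ∈ Subgroup.normalizer (Agrp K : Set (Equiv.Perm (K × K × K))) :=
  mem_normalizer_A fun u v w => ⟨v, -u, w, delta_conj_alpha u v w⟩

lemma beta_mem_normalizer [Fintype K] (ε : ℕ) (l m : Kˣ) :
    betaPerm ε l m ∈ Subgroup.normalizer (Agrp K : Set (Equiv.Perm (K × K × K))) :=
  mem_normalizer_A fun u v w => ⟨_, _, _, beta_conj_alpha ε l m u v w⟩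

lemma sigma_mem_normalizer [Fintype K] [CharP K 3] :
    sigmaPerm K ∈ Subgroup.normalizer (Agrp K : Set (Equiv.Perm (K × K × K))) :=
  mem_normalizer_A fun u v w => ⟨_, _, _, sigma_conj_alpha u v w⟩

/-- The group of "affine quadratic" permutations containing `Q` and `E`. -/
def PhatGrp (ε : ℕ) (hε0 : ε ≠ 0) (hodd : Odd ε)
    (hadd : ∀ x y : K, (x + y) ^ ε = x ^ ε + y ^ ε) :
    Subgroup (Equiv.Perm (K × K × K)) where
  carrier := {g | ∃ d e s v w : K, ∀ a b c : K,
    g (a, b, c) = (a + d * b ^ 2 + e * b + d ^ ε * c + s, b + v, c + w)}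
  one_mem' := ⟨0, 0, 0, 0, 0, by intro a b c; simp [zero_pow hε0]⟩
  mul_mem' := by
    rintro g h ⟨d1, e1, s1, v1, w1, hg⟩ ⟨d2, e2, s2, v2, w2, hh⟩
    refine ⟨d1 + d2, e1 + e2 + 2 * d1 * v2, s2 + d1 * v2 ^ 2 + e1 * v2 + d1 ^ ε * w2 + s1,
      v2 + v1, w2 + w1, ?_⟩
    intro a b c
    rw [Equiv.Perm.mul_apply, hh, hg, hadd]
    refine Prod.ext ?_ (Prod.ext ?_ ?_) <;> simp <;> ring
  inv_mem' := by
    rintro g ⟨d, e, s, v, w, hg⟩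
    have hneg : (-d) ^ ε = -(d ^ ε) := hodd.neg_pow d
    refine ⟨-d, -e + 2 * d * v, -(d * v ^ 2) + e * v + d ^ ε * w - s, -v, -w, ?_⟩
    intro a b c
    rw [Equiv.Perm.inv_def, Equiv.symm_apply_eq, hg, hneg]
    refine Prod.ext ?_ (Prod.ext ?_ ?_) <;> simp <;> ring

variable {ε : ℕ} {hε0 : ε ≠ 0} {hodd : Odd ε}
  {hadd : ∀ x y : K, (x + y) ^ ε = x ^ ε + y ^ ε}

lemma alpha_mem_Phat (u v w : K) : alphaPerm u v w ∈ PhatGrp ε hε0 hodd hadd :=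
  ⟨0, 0, u, v, w, by intro a b c; simp [zero_pow hε0]⟩

lemma gamma_mem_Phat (e : K) : gammaPerm e ∈ PhatGrp ε hε0 hodd hadd :=
  ⟨0, e, 0, 0, 0, by intro a b c; simp [zero_pow hε0]⟩

lemma tau_mem_Phat (d : K) : tauPerm ε d ∈ PhatGrp ε hε0 hodd hadd :=
  ⟨d, 0, 0, 0, 0, by intro a b c; simp⟩

lemma beta_conj_Phat (hq : ∀ x : K, x ^ (3 * ε) = x) (l m : Kˣ)
    {p : Equiv.Perm (K × K × K)} (hp : p ∈ PhatGrp ε hε0 hodd hadd) :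
    betaPerm ε l m * p * (betaPerm ε l m)⁻¹ ∈ PhatGrp ε hε0 hodd hadd := by
  obtain ⟨d, e, s, v, w, hg⟩ := hp
  have hl : (l : K) ≠ 0 := l.ne_zero
  have hm : (m : K) ≠ 0 := m.ne_zero
  have hn : ((l : K) * (m : K)) ^ (2 * ε) ≠ 0 := pow_ne_zero _ (mul_ne_zero hl hm)
  have key : ((l : K) * d * ((m : K)⁻¹) ^ 2) ^ ε * (((l : K) * (m : K)) ^ (2 * ε))
      = (l : K) * d ^ ε := by
    have h1 : ((m : K)⁻¹) ^ (2 * ε) * (m : K) ^ (2 * ε) = 1 := by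
      rw [← mul_pow, inv_mul_cancel₀ hm, one_pow]
    have h2 : (l : K) ^ ε * (l : K) ^ (2 * ε) = (l : K) := by
      rw [← pow_add]
      have : ε + 2 * ε = 3 * ε := by ring
      rw [this, hq]
    calc ((l : K) * d * ((m : K)⁻¹) ^ 2) ^ ε * (((l : K) * (m : K)) ^ (2 * ε))
        = ((l : K) ^ ε * (l : K) ^ (2 * ε)) * d ^ ε
            * (((m : K)⁻¹) ^ (2 * ε) * (m : K) ^ (2 * ε)) := by ring
      _ = (l : K) * d ^ ε := by rw [h1, h2, mul_one]
  have hd' : ((l : K) * d * ((m : K)⁻¹) ^ 2) ^ ε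
      = (l : K) * d ^ ε * (((l : K) * (m : K)) ^ (2 * ε))⁻¹ :=
    (eq_mul_inv_iff_mul_eq₀ hn).mpr key
  refine ⟨(l : K) * d * ((m : K)⁻¹) ^ 2, (l : K) * e * (m : K)⁻¹, (l : K) * s,
    (m : K) * v, ((l : K) * (m : K)) ^ (2 * ε) * w, ?_⟩
  intro a b c
  rw [Equiv.Perm.mul_apply, Equiv.Perm.mul_apply, betaPerm_inv_apply, hg, betaPerm_apply]
  refine Prod.ext ?_ (Prod.ext ?_ ?_)
  · show (l : K) * ((l : K)⁻¹ * a + d * ((m : K)⁻¹ * b) ^ 2 + e * ((m : K)⁻¹ * b)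
        + d ^ ε * ((((l : K) * (m : K)) ^ (2 * ε))⁻¹ * c) + s) = _
    rw [hd']
    field_simp
  · show (m : K) * ((m : K)⁻¹ * b + v) = _
    field_simp
  · show ((l : K) * (m : K)) ^ (2 * ε) * ((((l : K) * (m : K)) ^ (2 * ε))⁻¹ * c + w) = _
    field_simp

lemma sigma_conj_Phat [Fintype K] [CharP K 3]
    {p : Equiv.Perm (K × K × K)} (hp : p ∈ PhatGrp ε hε0 hodd hadd) :
    sigmaPerm K * p * (sigmaPerm K)⁻¹ ∈ PhatGrp ε hε0 hodd hadd := by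
  obtain ⟨d, e, s, v, w, hg⟩ := hp
  have : Fact (Nat.Prime 3) := ⟨by norm_num⟩
  have h3 : ∀ a b : K, (a + b) ^ 3 = a ^ 3 + b ^ 3 := fun a b => add_pow_char a b 3
  have hde : (d ^ ε) ^ 3 = (d ^ 3) ^ ε := by rw [← pow_mul, ← pow_mul, mul_comm]
  refine ⟨d ^ 3, e ^ 3, s ^ 3, v ^ 3, w ^ 3, ?_⟩
  intro A B C
  obtain ⟨a, ha⟩ := (frobPerm K).surjective A
  obtain ⟨b, hb⟩ := (frobPerm K).surjective B
  obtain ⟨c, hc⟩ := (frobPerm K).surjective C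
  have ha3 : a ^ 3 = A := ha
  have hb3 : b ^ 3 = B := hb
  have hc3 : c ^ 3 = C := hc
  have hx : sigmaPerm K (a, b, c) = (A, B, C) := by
    rw [sigmaPerm_apply, ha3, hb3, hc3]
  have lhs : (sigmaPerm K * p * (sigmaPerm K)⁻¹) (A, B, C) = sigmaPerm K (p (a, b, c)) := by
    rw [← hx, Equiv.Perm.mul_apply, Equiv.Perm.mul_apply, Equiv.Perm.inv_def, Equiv.symm_apply_apply]
  rw [lhs, hg, sigmaPerm_apply, ← ha3, ← hb3, ← hc3]
  refine Prod.ext ?_ (Prod.ext ?_ ?_)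
  · simp only [h3, mul_pow, hde]; ring
  · simp only [h3]
  · simp only [h3]

/-- The auxiliary group generated by all `betaPerm`s and `sigmaPerm`. -/
noncomputable def BsubGrp (K : Type*) [Field K] [Fintype K] [CharP K 3] (ε : ℕ) :
    Subgroup (Equiv.Perm (K × K × K)) :=
  Subgroup.closure ({g | ∃ l m : Kˣ, g = betaPerm ε l m} ∪ {sigmaPerm K})

lemma Bsub_le_normA [Fintype K] [CharP K 3] :
    BsubGrp K ε ≤ Subgroup.normalizer (Agrp K : Set (Equiv.Perm (K × K × K))) := by
  rw [BsubGrp, Subgroup.closure_le]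
  rintro g (⟨l, m, rfl⟩ | rfl)
  · exact beta_mem_normalizer ε l m
  · exact sigma_mem_normalizer

lemma Bsub_le_normPhat [Fintype K] [CharP K 3] (hq : ∀ x : K, x ^ (3 * ε) = x) :
    BsubGrp K ε ≤ Subgroup.normalizer (PhatGrp ε hε0 hodd hadd : Set (Equiv.Perm (K × K × K))) := by
  rw [BsubGrp, Subgroup.closure_le]
  rintro g (⟨l, m, rfl⟩ | rfl)
  · exact mem_normalizer_of_conj fun x hx => beta_conj_Phat hq l m hx
  · exact mem_normalizer_of_conj fun x hx => sigma_conj_Phat hx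

lemma phat_normA_mem_Q [Fintype K] [CharP K 3]
    {p : Equiv.Perm (K × K × K)} (hp : p ∈ PhatGrp ε hε0 hodd hadd)
    (hn : p ∈ Subgroup.normalizer (Agrp K : Set (Equiv.Perm (K × K × K)))) : p ∈ QgrpBig K := by
  obtain ⟨d, e, s, v, w, hg⟩ := hp
  -- conjugate `alphaPerm 0 1 0` by `p` to show `d = 0`
  have hc : p * alphaPerm 0 1 0 * p⁻¹ ∈ Agrp K :=
    (Subgroup.mem_normalizer_iff.mp hn (alphaPerm 0 1 0)).mp (alpha_mem_Agrp 0 1 0)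
  obtain ⟨u', v', w', hc'⟩ := mem_Agrp_iff.mp hc
  have heq : p * alphaPerm 0 1 0 = alphaPerm u' v' w' * p := by
    rw [← hc']; group
  have h1 := congrArg (fun f : Equiv.Perm (K × K × K) => f (0, 0, 0)) heq
  have h2 := congrArg (fun f : Equiv.Perm (K × K × K) => f (0, 1, 0)) heq
  simp only [Equiv.Perm.mul_apply, alphaPerm_apply] at h1 h2
  rw [hg, hg] at h1
  rw [hg, hg] at h2
  simp only [Prod.mk.injEq] at h1 h2
  have h30 : (3 : K) = 0 := by exact_mod_cast CharP.cast_eq_zero K 3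
  have e1 : d * 1 ^ 2 + e * 1 + s = s + u' := by
    have := h1.1; linear_combination this
  have e2 : d * (1 + 1) ^ 2 + e * (1 + 1) + s = (d * 1 ^ 2 + e * 1 + s) + u' := by
    have := h2.1; linear_combination this
  have hd0 : d = 0 := by linear_combination e1 - e2 + d * h30
  subst hd0
  have hp_eq : p = gammaPerm e * alphaPerm (s - e * v) v w := by
    apply Equiv.ext
    rintro ⟨a, b, c⟩
    rw [Equiv.Perm.mul_apply, alphaPerm_apply, gammaPerm_apply, hg]
    simp only [zero_pow hε0]
    refine Prod.ext ?_ (Prod.ext ?_ ?_) <;> simp <;> ring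
  rw [hp_eq]
  exact mul_mem (Subgroup.mem_sup_right (Subgroup.subset_closure ⟨e, rfl⟩))
    (Subgroup.mem_sup_left (alpha_mem_Agrp _ _ _))

/-- Every element of `G₂` decomposes as (element of `Phat`) * (element of `G12 ⊓ Bsub`). -/
noncomputable def G2hatGrp (K : Type*) [Field K] [Fintype K] [CharP K 3] (ε : ℕ)
    (hε0 : ε ≠ 0) (hodd : Odd ε) (hadd : ∀ x y : K, (x + y) ^ ε = x ^ ε + y ^ ε)
    (hq : ∀ x : K, x ^ (3 * ε) = x) :
    Subgroup (Equiv.Perm (K × K × K)) where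
  carrier := {g | ∃ p ∈ PhatGrp ε hε0 hodd hadd, ∃ h ∈ G12grp K ε ⊓ BsubGrp K ε, g = p * h}
  one_mem' := ⟨1, one_mem _, 1, one_mem _, (one_mul 1).symm⟩
  mul_mem' := by
    rintro g1 g2 ⟨p1, hp1, h1, hh1, rfl⟩ ⟨p2, hp2, h2, hh2, rfl⟩
    have hnorm : h1 ∈ Subgroup.normalizer (PhatGrp ε hε0 hodd hadd : Set (Equiv.Perm (K × K × K))) :=
      Bsub_le_normPhat hq (Subgroup.mem_inf.mp hh1).2
    exact ⟨p1 * (h1 * p2 * h1⁻¹),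
      mul_mem hp1 ((Subgroup.mem_normalizer_iff.mp hnorm p2).mp hp2),
      h1 * h2, mul_mem hh1 hh2, by group⟩
  inv_mem' := by
    rintro g ⟨p, hp, h, hh, rfl⟩
    have hnorm : h⁻¹ ∈ Subgroup.normalizer (PhatGrp ε hε0 hodd hadd : Set (Equiv.Perm (K × K × K))) :=
      Bsub_le_normPhat hq (inv_mem (Subgroup.mem_inf.mp hh).2)
    exact ⟨h⁻¹ * p⁻¹ * h⁻¹⁻¹,
      (Subgroup.mem_normalizer_iff.mp hnorm p⁻¹).mp (inv_mem hp),
      h⁻¹, inv_mem hh, by group⟩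

lemma G2_le_G2hat (K : Type*) [Field K] [Fintype K] [CharP K 3] (ε : ℕ)
    (hε0 : ε ≠ 0) (hodd : Odd ε) (hadd : ∀ x y : K, (x + y) ^ ε = x ^ ε + y ^ ε)
    (hq : ∀ x : K, x ^ (3 * ε) = x) :
    G2grp K ε ≤ G2hatGrp K ε hε0 hodd hadd hq := by
  have hPh : ∀ p ∈ PhatGrp ε hε0 hodd hadd, p ∈ G2hatGrp K ε hε0 hodd hadd hq :=
    fun p hp => ⟨p, hp, 1, one_mem _, (mul_one p).symm⟩
  have hBh : ∀ h ∈ G12grp K ε ⊓ BsubGrp K ε, h ∈ G2hatGrp K ε hε0 hodd hadd hq :=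
    fun h hh => ⟨1, one_mem _, h, hh, (one_mul h).symm⟩
  have hS12 : Sgrp K ε ≤ G12grp K ε := le_sup_of_le_left (le_sup_of_le_left le_sup_right)
  have hT12 : Tgrp K ε ≤ G12grp K ε := le_sup_of_le_left le_sup_right
  have hSig12 : Siggrp K ≤ G12grp K ε := le_sup_right
  refine sup_le (sup_le (sup_le (sup_le ?_ ?_) ?_) ?_) ?_
  · refine sup_le ?_ ?_
    · refine (Subgroup.closure_le _).mpr ?_
      rintro g ⟨u, v, w, rfl⟩
      exact hPh _ (alpha_mem_Phat u v w)
    · refine (Subgroup.closure_le _).mpr ?_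
      rintro g ⟨e, rfl⟩
      exact hPh _ (gamma_mem_Phat e)
  · refine (Subgroup.closure_le _).mpr ?_
    rintro g ⟨μ, rfl⟩
    exact hBh _ (Subgroup.mem_inf.mpr ⟨hS12 (Subgroup.subset_closure ⟨μ, rfl⟩),
      Subgroup.subset_closure (Or.inl ⟨μ ^ 2, μ, rfl⟩)⟩)
  · refine (Subgroup.closure_le _).mpr ?_
    rintro g ⟨d, rfl⟩
    exact hPh _ (tau_mem_Phat d)
  · refine (Subgroup.closure_le _).mpr ?_
    rintro g ⟨μ, rfl⟩
    exact hBh _ (Subgroup.mem_inf.mpr ⟨hT12 (Subgroup.subset_closure ⟨μ, rfl⟩),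
      Subgroup.subset_closure (Or.inl ⟨μ, μ⁻¹, rfl⟩)⟩)
  · refine (Subgroup.closure_le _).mpr ?_
    rintro g hgmem
    rw [Set.mem_singleton_iff] at hgmem
    subst hgmem
    exact hBh _ (Subgroup.mem_inf.mpr ⟨hSig12 (Subgroup.subset_closure rfl),
      Subgroup.subset_closure (Or.inr rfl)⟩)

end Aux

/-- Lemma 2.11 (parts i, ii): `G₁ ∩ G₂ = ⟨Q, S, T, Σ⟩`, and this group is the normalizer
of `A` in `G₂`. -/
theorem stmt12 (r : ℕ) (hr : 1 ≤ r) (K : Type*) [Field K] [Fintype K] [CharP K 3]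
    (hcard : Fintype.card K = 3 ^ r) (ε : ℕ) (hε : ε = 3 ^ (r - 1)) :
    G1grp K ε ⊓ G2grp K ε = G12grp K ε
    ∧ G12grp K ε = G2grp K ε ⊓ Subgroup.normalizer (Agrp K : Set (Equiv.Perm (K × K × K))) := by
  have hprime : Fact (Nat.Prime 3) := ⟨by norm_num⟩
  have hε0 : ε ≠ 0 := by rw [hε]; positivity
  have hodd : Odd ε := by rw [hε]; exact Odd.pow ⟨1, by norm_num⟩
  have hadd : ∀ x y : K, (x + y) ^ ε = x ^ ε + y ^ ε := by
    intro x y; rw [hε]; exact add_pow_char_pow x y 3 (r - 1)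
  have hq : ∀ x : K, x ^ (3 * ε) = x := by
    intro x
    have h1 : 3 * ε = 3 ^ r := by
      rw [hε, ← pow_succ']
      congr 1
      omega
    rw [h1, ← hcard, FiniteField.pow_card]
  -- lattice inequalities
  have hQ12 : QgrpBig K ≤ G12grp K ε := le_sup_of_le_left (le_sup_of_le_left le_sup_left)
  have h12le2 : G12grp K ε ≤ G2grp K ε := by
    refine sup_le (sup_le (sup_le ?_ ?_) ?_) ?_
    · exact le_sup_of_le_left (le_sup_of_le_left (le_sup_of_le_left le_sup_left))
    · exact le_sup_of_le_left (le_sup_of_le_left (le_sup_of_le_left le_sup_right))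
    · exact le_sup_of_le_left le_sup_right
    · exact le_sup_right
  have h12le1 : G12grp K ε ≤ G1grp K ε := by
    refine sup_le (sup_le (sup_le ?_ ?_) ?_) ?_
    · refine sup_le ?_ ?_
      · exact le_sup_of_le_left (le_sup_of_le_left le_sup_left)
      · exact le_sup_of_le_left (le_sup_of_le_left
          (le_sup_of_le_right (le_sup_of_le_left le_sup_left)))
    · exact le_sup_of_le_left le_sup_right
    · exact le_sup_of_le_left (le_sup_of_le_left (le_sup_of_le_right le_sup_right))
    · exact le_sup_right
  -- normalizer inequalities
  have hA_N : Agrp K ≤ Subgroup.normalizer (Agrp K : Set (Equiv.Perm (K × K × K))) := Subgroup.le_normalizer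
  have hC_N : Cgrp K ≤ Subgroup.normalizer (Agrp K : Set (Equiv.Perm (K × K × K))) := (Subgroup.closure_le _).mpr
    (by rintro g ⟨e, rfl⟩; exact gamma_mem_normalizer e)
  have hD_N : Dgrp K ≤ Subgroup.normalizer (Agrp K : Set (Equiv.Perm (K × K × K))) := (Subgroup.closure_le _).mpr
    (by rintro g hgm; rw [Set.mem_singleton_iff] at hgm; subst hgm; exact delta_mem_normalizer)
  have hS_N : Sgrp K ε ≤ Subgroup.normalizer (Agrp K : Set (Equiv.Perm (K × K × K))) := (Subgroup.closure_le _).mpr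
    (by rintro g ⟨μ, rfl⟩; exact beta_mem_normalizer ε _ _)
  have hT_N : Tgrp K ε ≤ Subgroup.normalizer (Agrp K : Set (Equiv.Perm (K × K × K))) := (Subgroup.closure_le _).mpr
    (by rintro g ⟨μ, rfl⟩; exact beta_mem_normalizer ε _ _)
  have hSig_N : Siggrp K ≤ Subgroup.normalizer (Agrp K : Set (Equiv.Perm (K × K × K))) := (Subgroup.closure_le _).mpr
    (by rintro g hgm; rw [Set.mem_singleton_iff] at hgm; subst hgm; exact sigma_mem_normalizer)
  have h12leN : G12grp K ε ≤ Subgroup.normalizer (Agrp K : Set (Equiv.Perm (K × K × K))) :=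
    sup_le (sup_le (sup_le (sup_le hA_N hC_N) hS_N) hT_N) hSig_N
  have h1leN : G1grp K ε ≤ Subgroup.normalizer (Agrp K : Set (Equiv.Perm (K × K × K))) :=
    sup_le (sup_le (sup_le hA_N (sup_le (sup_le hC_N hD_N) hT_N)) hS_N) hSig_N
  -- the key inclusion
  have hkey : G2grp K ε ⊓ Subgroup.normalizer (Agrp K : Set (Equiv.Perm (K × K × K))) ≤ G12grp K ε := by
    rintro g hg
    obtain ⟨hg2, hgN⟩ := Subgroup.mem_inf.mp hg
    obtain ⟨p, hp, h, hh, rfl⟩ := G2_le_G2hat K ε hε0 hodd hadd hq hg2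
    obtain ⟨hh12, hhB⟩ := Subgroup.mem_inf.mp hh
    have hhN : h ∈ Subgroup.normalizer (Agrp K : Set (Equiv.Perm (K × K × K))) := Bsub_le_normA hhB
    have hpN : p ∈ Subgroup.normalizer (Agrp K : Set (Equiv.Perm (K × K × K))) := by
      have := mul_mem hgN (inv_mem hhN)
      simpa [mul_assoc] using this
    exact mul_mem (hQ12 (phat_normA_mem_Q hp hpN)) hh12
  refine ⟨le_antisymm ?_ (le_inf h12le1 h12le2), le_antisymm (le_inf h12le2 h12leN) hkey⟩
  intro g hg
  obtain ⟨h1, h2⟩ := Subgroup.mem_inf.mp hg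
  exact hkey (Subgroup.mem_inf.mpr ⟨h2, h1leN h1⟩)
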